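/- With B_n = B ⊗_A ⋯ ⊗_A B the (n+1)-fold tensor power and d^{i,j} y := π_j^*(y) − π_i^*(y) (difference of the j-th and i-th factor inclusions of y ∈ B), for all i < j and all y ∈ B one has d^{i,j} y = d^{0,j} y − d^{0,i} y, and for all y, y' ∈ B: (d^{i,j} y)(d^{i,j} y') + (d^{0,i} y)(d^{0,j} y') + (d^{0,i} y')(d^{0,j} y) lies in the ideal I_{0i}² + I_{0j}², where I_{kℓ} is the kernel of the map merging factors k and ℓ. -/

import Mathlib

open scoped TensorProduct
open PiTensorProduct

variable (A B : Type) [CommRing A] [CommRing B] [Algebra A B]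

abbrev Bpow (n : ℕ) : Type := ⨂[A] (_ : Fin n), B

noncomputable def rmap {m n : ℕ} (r : Fin m → Fin n) : Bpow A B m →ₐ[A] Bpow A B n :=
  PiTensorProduct.liftAlgHom
    ((MultilinearMap.mkPiAlgebra A (Fin m) (Bpow A B n)).compLinearMap
      (fun k => (PiTensorProduct.singleAlgHom (R := A) (A := fun _ : Fin n => B) (r k)).toLinearMap))
    (by simp [← PiTensorProduct.one_def])
    (by intro x y
        simp only [MultilinearMap.compLinearMap_apply, MultilinearMap.mkPiAlgebra_apply,
          Pi.mul_apply, AlgHom.toLinearMap_apply, _root_.map_mul, Finset.prod_mul_distrib])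

noncomputable def mergeN (n i j : ℕ) (hij : i < j) (hj : j ≤ n) :
    Bpow A B (n+1) →ₐ[A] Bpow A B n :=
  rmap A B (fun k => if h1 : k.val < j then ⟨k.val, by omega⟩
    else if h2 : k.val = j then ⟨i, by omega⟩
    else ⟨k.val - 1, by have := k.isLt; omega⟩)

noncomputable def Iideal (n i j : ℕ) (hij : i < j) (hj : j ≤ n) : Ideal (Bpow A B (n+1)) :=
  RingHom.ker (mergeN A B n i j hij hj)

noncomputable def Kideal (n : ℕ) : Ideal (Bpow A B (n+1)) :=
  ⨆ (i : ℕ) (j : ℕ) (hij : i < j) (hj : j ≤ n), (Iideal A B n i j hij hj) ^ 2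

abbrev Cq (n : ℕ) : Type := Bpow A B (n+1) ⧸ Kideal A B n

noncomputable def Jt (n i j : ℕ) (hij : i < j) (hj : j ≤ n) : Ideal (Cq A B n) :=
  Ideal.map (Ideal.Quotient.mk (Kideal A B n)) (Iideal A B n i j hij hj)

noncomputable def dElt (n i j : ℕ) (hi : i ≤ n) (hj : j ≤ n) (y : B) : Bpow A B (n+1) :=
  PiTensorProduct.singleAlgHom (R := A) (A := fun _ : Fin (n+1) => B) ⟨j, by omega⟩ y
    - PiTensorProduct.singleAlgHom (R := A) (A := fun _ : Fin (n+1) => B) ⟨i, by omega⟩ y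

noncomputable def insN (n j : ℕ) (hj : j ≤ n+1) : Bpow A B (n+1) →ₐ[A] Bpow A B (n+2) :=
  rmap A B (fun k => if h : k.val < j then ⟨k.val, by omega⟩
    else ⟨k.val + 1, by have := k.isLt; omega⟩)

noncomputable def eN (n : ℕ) : Bpow A B (n+1) →ₗ[A] Bpow A B (n+2) :=
  ∑ j : Fin (n+2), ((-1 : ℤ) ^ (j : ℕ)) • (insN A B n j (by omega)).toLinearMap

noncomputable def smashG (m n N : ℕ) (h : N = m + n) (x : Bpow A B (m+1)) (y : Bpow A B (n+1)) :
    Bpow A B (N+1) :=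
  rmap A B (fun k : Fin (m+1) => (⟨k.val, by have := k.isLt; omega⟩ : Fin (N+1))) x *
  rmap A B (fun k : Fin (n+1) => (⟨m + k.val, by have := k.isLt; omega⟩ : Fin (N+1))) y


lemma rmap_single {m n : ℕ} (r : Fin m → Fin n) (idx : Fin m) (y : B) :
    rmap A B r (PiTensorProduct.singleAlgHom (R := A) (A := fun _ : Fin m => B) idx y)
    = PiTensorProduct.singleAlgHom (R := A) (A := fun _ : Fin n => B) (r idx) y := by
  simp only [rmap, PiTensorProduct.singleAlgHom_apply]
  erw [PiTensorProduct.liftAlgHom_apply, PiTensorProduct.lift.tprod]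
  simp only [MultilinearMap.compLinearMap_apply,
    MultilinearMap.mkPiAlgebra_apply, AlgHom.toLinearMap_apply]
  rw [Finset.prod_eq_single idx]
  · simp
  · intro k _ hk
    simp [MonoidHom.mulSingle_apply, hk, ← PiTensorProduct.one_def]
  · simp

lemma dElt_mem (n k : ℕ) (hk : 0 < k) (hkn : k ≤ n) (y : B) :
    dElt A B n 0 k (by omega) hkn y ∈ Iideal A B n 0 k hk hkn := by
  show mergeN A B n 0 k hk hkn _ = 0
  rw [dElt, map_sub, mergeN, rmap_single, rmap_single, sub_eq_zero]
  congr 1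
  simp [Fin.ext_iff, hk, hk.ne']

/-- With `d^{i,j} y := π_j^*(y) − π_i^*(y)` in `B^{⊗(n+1)}`, for
`0 < i < j ≤ n`: `d^{i,j} y = d^{0,j} y − d^{0,i} y`, and
`(d^{i,j}y)(d^{i,j}y') + (d^{0,i}y)(d^{0,j}y') + (d^{0,i}y')(d^{0,j}y) ∈ I_{0i}² + I_{0j}²`. -/
theorem statement4 (n i j : ℕ) (hi : 0 < i) (hij : i < j) (hj : j ≤ n) (y y' : B) :
    dElt A B n i j (by omega) hj y =
      dElt A B n 0 j (by omega) hj y - dElt A B n 0 i (by omega) (by omega) y ∧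
    dElt A B n i j (by omega) hj y * dElt A B n i j (by omega) hj y'
      + dElt A B n 0 i (by omega) (by omega) y * dElt A B n 0 j (by omega) hj y'
      + dElt A B n 0 i (by omega) (by omega) y' * dElt A B n 0 j (by omega) hj y
      ∈ (Iideal A B n 0 i hi (by omega)) ^ 2 + (Iideal A B n 0 j (by omega) hj) ^ 2 := by
  constructor
  · simp only [dElt]; ring
  · have key : dElt A B n i j (by omega) hj y * dElt A B n i j (by omega) hj y'
      + dElt A B n 0 i (by omega) (by omega) y * dElt A B n 0 j (by omega) hj y'
      + dElt A B n 0 i (by omega) (by omega) y' * dElt A B n 0 j (by omega) hj y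
      = dElt A B n 0 i (by omega) (by omega) y * dElt A B n 0 i (by omega) (by omega) y'
      + dElt A B n 0 j (by omega) hj y * dElt A B n 0 j (by omega) hj y' := by
      simp only [dElt]; ring
    have m1 : dElt A B n 0 i (by omega) (by omega) y * dElt A B n 0 i (by omega) (by omega) y'
        ∈ (Iideal A B n 0 i hi (by omega)) ^ 2 := by
      rw [sq]
      exact Ideal.mul_mem_mul (dElt_mem A B n i hi (by omega) y)
        (dElt_mem A B n i hi (by omega) y')
    have m2 : dElt A B n 0 j (by omega) hj y * dElt A B n 0 j (by omega) hj y'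
        ∈ (Iideal A B n 0 j (by omega) hj) ^ 2 := by
      rw [sq]
      exact Ideal.mul_mem_mul (dElt_mem A B n j (by omega) hj y)
        (dElt_mem A B n j (by omega) hj y')
    rw [key, Submodule.add_eq_sup]
    exact Submodule.add_mem_sup m1 m2
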